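/- The Hadamard product of ideals distributes over intersections: for any family of ideals J_l (l ∈ L) and any ideal K' in K[x_0,…,x_N], one has (⋂_{l∈L} J_l) ⋆ K' = ⋂_{l∈L} (J_l ⋆ K'). -/

import Mathlib

open MvPolynomial

noncomputable section

variable {K : Type*} [Field K]

/-- The Hadamard product of two ideals `I, J ⊆ K[x_0,…,x_N]`: introduce new variables
`y_0,…,y_N` and `z_0,…,z_N` (encoded via a sum type), map `I` via `x_i ↦ y_i`, `J` via
`x_i ↦ z_i`, add the relations `x_i − y_i z_i`, and eliminate `y, z` (i.e. take the
preimage in `K[x]`). -/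
def hadamardProduct (N : ℕ) (I J : Ideal (MvPolynomial (Fin (N+1)) K)) :
    Ideal (MvPolynomial (Fin (N+1)) K) :=
  Ideal.comap
    (rename (Sum.inl : Fin (N+1) → Fin (N+1) ⊕ (Fin (N+1) ⊕ Fin (N+1))))
    (Ideal.map (rename (fun i : Fin (N+1) =>
        (Sum.inr (Sum.inl i) : Fin (N+1) ⊕ (Fin (N+1) ⊕ Fin (N+1))))) I
      + Ideal.map (rename (fun i : Fin (N+1) =>
        (Sum.inr (Sum.inr i) : Fin (N+1) ⊕ (Fin (N+1) ⊕ Fin (N+1))))) J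
      + Ideal.span { f | ∃ i : Fin (N+1),
          f = X (Sum.inl i) - X (Sum.inr (Sum.inl i)) * X (Sum.inr (Sum.inr i)) })

section CoefficientFunctionals
variable {S₀ : Type*} [CommRing S₀] [Algebra K S₀] {σ : Type*}

/-- Apply a linear functional to each coefficient of a polynomial. -/
noncomputable def hcomp (φ : S₀ →ₗ[K] K) (p : MvPolynomial σ S₀) : MvPolynomial σ K :=
  ∑ m ∈ p.support, monomial m (φ (coeff m p))

lemma coeff_hcomp (φ : S₀ →ₗ[K] K) (p : MvPolynomial σ S₀) (m : σ →₀ ℕ) :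
    coeff m (hcomp φ p) = φ (coeff m p) := by
  classical
  rw [hcomp]
  rw [MvPolynomial.coeff_sum]
  simp_rw [coeff_monomial]
  rw [Finset.sum_ite_eq' p.support m (fun m' => φ (coeff m' p))]
  by_cases h : m ∈ p.support
  · rw [if_pos h]
  · rw [if_neg h, notMem_support_iff.mp h, map_zero]

lemma hcomp_add (φ : S₀ →ₗ[K] K) (p q : MvPolynomial σ S₀) :
    hcomp φ (p + q) = hcomp φ p + hcomp φ q := by
  ext m; simp only [coeff_hcomp, coeff_add, map_add]

noncomputable def hcompHom (φ : S₀ →ₗ[K] K) : MvPolynomial σ S₀ →+ MvPolynomial σ K :=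
  AddMonoidHom.mk' (hcomp φ) (hcomp_add φ)

lemma hcomp_mul_map (φ : S₀ →ₗ[K] K) (s : MvPolynomial σ S₀) (q : MvPolynomial σ K) :
    hcomp φ (s * MvPolynomial.map (algebraMap K S₀) q) = hcomp φ s * q := by
  classical
  ext m
  rw [coeff_hcomp, coeff_mul, coeff_mul, map_sum]
  refine Finset.sum_congr rfl fun x _ => ?_
  rw [coeff_map, coeff_hcomp, mul_comm (coeff x.1 s), ← Algebra.smul_def, map_smul,
    smul_eq_mul, mul_comm]

lemma hcomp_mem (I : Ideal (MvPolynomial σ K)) (φ : S₀ →ₗ[K] K) {p : MvPolynomial σ S₀}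
    (hp : p ∈ I.map (MvPolynomial.map (algebraMap K S₀) :
      MvPolynomial σ K →+* MvPolynomial σ S₀)) : hcomp φ p ∈ I := by
  have hp' : p ∈ Submodule.span (MvPolynomial σ S₀)
      ((MvPolynomial.map (algebraMap K S₀) : MvPolynomial σ K →+* MvPolynomial σ S₀) '' I) := hp
  obtain ⟨n, c, G, rfl⟩ := Submodule.mem_span_set'.mp hp'
  show hcompHom φ (∑ i, c i • (G i : MvPolynomial σ S₀)) ∈ I
  rw [map_sum (hcompHom φ)]
  refine Ideal.sum_mem _ fun i _ => ?_
  obtain ⟨q, hq, hGq⟩ := (G i).2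
  show hcomp φ (c i • (G i : MvPolynomial σ S₀)) ∈ I
  rw [smul_eq_mul, ← hGq, hcomp_mul_map]
  exact I.mul_mem_left _ hq

lemma hcomp_reconstruct {ι : Type*} (b : Module.Basis ι K S₀) (p : MvPolynomial σ S₀) :
    ∃ T : Finset ι, p = ∑ i ∈ T,
      MvPolynomial.map (algebraMap K S₀) (hcomp (b.coord i) p) * C (b i) := by
  classical
  refine ⟨p.support.biUnion (fun m => (b.repr (coeff m p)).support), ?_⟩
  ext m
  rw [MvPolynomial.coeff_sum]
  have hsub : (b.repr (coeff m p)).support ⊆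
      p.support.biUnion (fun m => (b.repr (coeff m p)).support) := by
    by_cases hm : m ∈ p.support
    · exact Finset.subset_biUnion_of_mem (fun m => (b.repr (coeff m p)).support) hm
    · simp [notMem_support_iff.mp hm]
  calc coeff m p
      = Finsupp.linearCombination K (b : ι → S₀) (b.repr (coeff m p)) :=
        (b.linearCombination_repr _).symm
    _ = ∑ i ∈ (b.repr (coeff m p)).support, b.repr (coeff m p) i • b i := by
        rw [Finsupp.linearCombination_apply, Finsupp.sum]
    _ = ∑ i ∈ p.support.biUnion (fun m => (b.repr (coeff m p)).support),
          b.repr (coeff m p) i • b i := by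
        refine Finset.sum_subset hsub fun i _ hi => ?_
        rw [Finsupp.notMem_support_iff.mp hi, zero_smul]
    _ = _ := by
        refine Finset.sum_congr rfl fun i _ => ?_
        rw [mul_comm ((MvPolynomial.map (algebraMap K S₀)) (hcomp (b.coord i) p)), coeff_C_mul, coeff_map, coeff_hcomp,
          Module.Basis.coord_apply, Algebra.smul_def, mul_comm]

lemma map_iInf_eq {L : Type*} (J : L → Ideal (MvPolynomial σ K)) :
    Ideal.map (MvPolynomial.map (algebraMap K S₀) : MvPolynomial σ K →+* MvPolynomial σ S₀)
        (⨅ l, J l) =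
      ⨅ l, Ideal.map (MvPolynomial.map (algebraMap K S₀) :
        MvPolynomial σ K →+* MvPolynomial σ S₀) (J l) := by
  refine le_antisymm (le_iInf fun l => Ideal.map_mono (iInf_le _ l)) ?_
  intro p hp
  obtain ⟨T, hT⟩ := hcomp_reconstruct (Module.Basis.ofVectorSpace K S₀) p
  rw [hT]
  refine Ideal.sum_mem _ fun i _ => Ideal.mul_mem_right _ _ (Ideal.mem_map_of_mem _ ?_)
  refine (Submodule.mem_iInf _).mpr fun l => ?_
  exact hcomp_mem (J l) _ ((Submodule.mem_iInf _).mp hp l)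

end CoefficientFunctionals


/-- The substitution `x_i ↦ y_i z_i`, `y_i ↦ y_i`, `z_i ↦ z_i`. -/
def phimap (N : ℕ) : MvPolynomial (Fin (N+1) ⊕ (Fin (N+1) ⊕ Fin (N+1))) K →ₐ[K]
    MvPolynomial (Fin (N+1) ⊕ Fin (N+1)) K :=
  aeval (Sum.elim (fun i => X (Sum.inl i) * X (Sum.inr i)) X)

lemma phimap_rename {N : ℕ} (p : MvPolynomial (Fin (N+1) ⊕ Fin (N+1)) K) :
    phimap N (rename Sum.inr p) = p := by
  rw [phimap, aeval_rename, Sum.elim_comp_inr, aeval_X_left_apply]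

lemma phimap_surj (N : ℕ) : Function.Surjective (phimap N (K := K)) :=
  fun q => ⟨rename Sum.inr q, phimap_rename q⟩

/-- The ideal of relations `x_i - y_i z_i`. -/
def hRel (N : ℕ) : Ideal (MvPolynomial (Fin (N+1) ⊕ (Fin (N+1) ⊕ Fin (N+1))) K) :=
  Ideal.span { f | ∃ i : Fin (N+1),
    f = X (Sum.inl i) - X (Sum.inr (Sum.inl i)) * X (Sum.inr (Sum.inr i)) }

lemma sub_mem_hRel {N : ℕ} (p : MvPolynomial (Fin (N+1) ⊕ (Fin (N+1) ⊕ Fin (N+1))) K) :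
    p - rename Sum.inr (phimap N p) ∈ hRel N := by
  induction p using MvPolynomial.induction_on with
  | C a => simp only [phimap, aeval_C, algebraMap_eq, rename_C, sub_self]; exact (hRel N).zero_mem
  | add p q hp hq =>
      have := (hRel N).add_mem hp hq
      convert this using 1
      rw [map_add, map_add]; ring
  | mul_X p v hp =>
      have h2 : (X v : MvPolynomial (Fin (N+1) ⊕ (Fin (N+1) ⊕ Fin (N+1))) K)
          - rename Sum.inr (phimap N (X v)) ∈ hRel N := by
        cases v with
        | inl i =>
            refine Ideal.subset_span ⟨i, ?_⟩
            simp [phimap]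
        | inr w =>
            simp only [phimap, aeval_X, Sum.elim_inr, rename_X, sub_self]
            exact (hRel N).zero_mem
      have := (hRel N).add_mem (Ideal.mul_mem_right (rename Sum.inr (phimap N (X v))) _ hp)
        ((hRel N).mul_mem_left p h2)
      convert this using 1
      rw [map_mul, map_mul]; ring

lemma mem_hRel_of_phimap_eq_zero {N : ℕ}
    {p : MvPolynomial (Fin (N+1) ⊕ (Fin (N+1) ⊕ Fin (N+1))) K}
    (h : phimap N p = 0) : p ∈ hRel N := by
  have := sub_mem_hRel p
  rwa [h, map_zero, sub_zero] at this


def qmap {N : ℕ} (K' : Ideal (MvPolynomial (Fin (N+1)) K)) :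
    MvPolynomial (Fin (N+1) ⊕ Fin (N+1)) K →+*
      MvPolynomial (Fin (N+1)) (MvPolynomial (Fin (N+1)) K ⧸ K') :=
  (MvPolynomial.map (Ideal.Quotient.mk K')).comp
    ((sumAlgEquiv K (Fin (N+1)) (Fin (N+1))).toAlgHom.toRingHom)

lemma qmap_surj {N : ℕ} (K' : Ideal (MvPolynomial (Fin (N+1)) K)) :
    Function.Surjective (qmap K') :=
  (MvPolynomial.map_surjective _ Ideal.Quotient.mk_surjective).comp
    (sumAlgEquiv K (Fin (N+1)) (Fin (N+1))).surjective

lemma ker_qmap {N : ℕ} (K' : Ideal (MvPolynomial (Fin (N+1)) K)) :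
    RingHom.ker (qmap K') =
      Ideal.map (rename (Sum.inr : Fin (N+1) → Fin (N+1) ⊕ Fin (N+1))
        : MvPolynomial (Fin (N+1)) K →ₐ[K] _).toRingHom K' := by
  set e := (sumAlgEquiv K (Fin (N+1)) (Fin (N+1))).toAlgHom.toRingHom
  have h1 : RingHom.ker (qmap K') = Ideal.comap e
      (RingHom.ker (MvPolynomial.map (Ideal.Quotient.mk K')
        : MvPolynomial (Fin (N+1)) (MvPolynomial (Fin (N+1)) K) →+* _)) := by
    rw [RingHom.comap_ker]; rfl
  rw [h1, MvPolynomial.ker_map, Ideal.mk_ker]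
  have h2 : Ideal.map (C : MvPolynomial (Fin (N+1)) K →+*
      MvPolynomial (Fin (N+1)) (MvPolynomial (Fin (N+1)) K)) K' =
      Ideal.map e (Ideal.map (rename (Sum.inr : Fin (N+1) → Fin (N+1) ⊕ Fin (N+1))
        : MvPolynomial (Fin (N+1)) K →ₐ[K] _).toRingHom K') := by
    rw [Ideal.map_map]
    congr 1
    apply MvPolynomial.ringHom_ext <;> intros <;> simp [e]
  rw [h2, Ideal.comap_map_of_bijective e
    (sumAlgEquiv K (Fin (N+1)) (Fin (N+1))).bijective]

def Fmap (N : ℕ) (K' : Ideal (MvPolynomial (Fin (N+1)) K)) :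
    MvPolynomial (Fin (N+1)) K →+*
      MvPolynomial (Fin (N+1)) (MvPolynomial (Fin (N+1)) K ⧸ K') :=
  (qmap K').comp ((phimap N).toRingHom.comp
    (rename (Sum.inl : Fin (N+1) → Fin (N+1) ⊕ (Fin (N+1) ⊕ Fin (N+1)))
      : MvPolynomial (Fin (N+1)) K →ₐ[K] _).toRingHom)

lemma hp_eq {N : ℕ} (I K' : Ideal (MvPolynomial (Fin (N+1)) K)) :
    hadamardProduct N I K' = Ideal.comap (Fmap N K')
      (Ideal.map (MvPolynomial.map
        (algebraMap K (MvPolynomial (Fin (N+1)) K ⧸ K'))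
        : MvPolynomial (Fin (N+1)) K →+* _) I) := by
  set ry := (rename (fun i : Fin (N+1) =>
      (Sum.inr (Sum.inl i) : Fin (N+1) ⊕ (Fin (N+1) ⊕ Fin (N+1))))
    : MvPolynomial (Fin (N+1)) K →ₐ[K] _).toRingHom with hry
  set rz := (rename (fun i : Fin (N+1) =>
      (Sum.inr (Sum.inr i) : Fin (N+1) ⊕ (Fin (N+1) ⊕ Fin (N+1))))
    : MvPolynomial (Fin (N+1)) K →ₐ[K] _).toRingHom with hrz
  set rinl := (rename (Sum.inl : Fin (N+1) → Fin (N+1) ⊕ (Fin (N+1) ⊕ Fin (N+1)))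
    : MvPolynomial (Fin (N+1)) K →ₐ[K] _).toRingHom with hrinl
  set φ := (phimap N (K := K)).toRingHom with hφ
  set A := Ideal.map ry I ⊔ Ideal.map rz K' ⊔ hRel N with hA
  have e0 : hadamardProduct N I K' = Ideal.comap rinl A := by
    rw [hadamardProduct, hA, Ideal.add_eq_sup, Ideal.add_eq_sup]
    rfl
  -- Step 1 : A is saturated for φ
  have e1 : Ideal.comap φ (Ideal.map φ A) = A := by
    have hsurj : Function.Surjective ⇑φ := phimap_surj N
    rw [Ideal.comap_map_of_surjective φ hsurj]
    refine sup_eq_left.mpr ?_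
    intro x hx
    have hx0 : φ x = 0 := by
      rw [Ideal.mem_comap] at hx
      exact (Ideal.mem_bot).mp hx
    have hx1 : x ∈ hRel N := mem_hRel_of_phimap_eq_zero hx0
    exact (le_sup_right : hRel N ≤ A) hx1
  -- Step 2 : compute map φ A
  have e2 : Ideal.map φ A =
      Ideal.map (rename (Sum.inl : Fin (N+1) → Fin (N+1) ⊕ Fin (N+1))
        : MvPolynomial (Fin (N+1)) K →ₐ[K] _).toRingHom I ⊔
      Ideal.map (rename (Sum.inr : Fin (N+1) → Fin (N+1) ⊕ Fin (N+1))
        : MvPolynomial (Fin (N+1)) K →ₐ[K] _).toRingHom K' := by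
    rw [hA, Ideal.map_sup, Ideal.map_sup]
    have hy : Ideal.map φ (Ideal.map ry I) =
        Ideal.map (rename (Sum.inl : Fin (N+1) → Fin (N+1) ⊕ Fin (N+1))
          : MvPolynomial (Fin (N+1)) K →ₐ[K] _).toRingHom I := by
      rw [Ideal.map_map]
      congr 1
      apply MvPolynomial.ringHom_ext <;> intros <;> simp [hφ, hry, phimap]
    have hz : Ideal.map φ (Ideal.map rz K') =
        Ideal.map (rename (Sum.inr : Fin (N+1) → Fin (N+1) ⊕ Fin (N+1))
          : MvPolynomial (Fin (N+1)) K →ₐ[K] _).toRingHom K' := by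
      rw [Ideal.map_map]
      congr 1
      apply MvPolynomial.ringHom_ext <;> intros <;> simp [hφ, hrz, phimap]
    have hrel : Ideal.map φ (hRel N) = ⊥ := by
      refine le_bot_iff.mp ?_
      rw [hRel, Ideal.map_span, Ideal.span_le]
      rintro x ⟨y, ⟨i, rfl⟩, rfl⟩
      simp [hφ, phimap]
    rw [hy, hz, hrel, sup_bot_eq]
  -- Step 3 : eliminate z via the quotient
  have e3 : Ideal.map (rename (Sum.inl : Fin (N+1) → Fin (N+1) ⊕ Fin (N+1))
        : MvPolynomial (Fin (N+1)) K →ₐ[K] _).toRingHom I ⊔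
      Ideal.map (rename (Sum.inr : Fin (N+1) → Fin (N+1) ⊕ Fin (N+1))
        : MvPolynomial (Fin (N+1)) K →ₐ[K] _).toRingHom K' =
      Ideal.comap (qmap K') (Ideal.map (qmap K')
        (Ideal.map (rename (Sum.inl : Fin (N+1) → Fin (N+1) ⊕ Fin (N+1))
          : MvPolynomial (Fin (N+1)) K →ₐ[K] _).toRingHom I)) := by
    rw [Ideal.comap_map_of_surjective (qmap K') (qmap_surj K'),
      ← RingHom.ker_eq_comap_bot, ker_qmap]
  have e4 : Ideal.map (qmap K')
      (Ideal.map (rename (Sum.inl : Fin (N+1) → Fin (N+1) ⊕ Fin (N+1))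
        : MvPolynomial (Fin (N+1)) K →ₐ[K] _).toRingHom I) =
      Ideal.map (MvPolynomial.map
        (algebraMap K (MvPolynomial (Fin (N+1)) K ⧸ K'))
        : MvPolynomial (Fin (N+1)) K →+* _) I := by
    rw [Ideal.map_map]
    congr 1
    apply MvPolynomial.ringHom_ext <;> intros <;>
      simp [qmap, Ideal.Quotient.algebraMap_eq,
        IsScalarTower.algebraMap_apply K (MvPolynomial (Fin (N+1)) K)
          (MvPolynomial (Fin (N+1)) K ⧸ K')]
  rw [e0, ← e1, Ideal.comap_comap, e2, e3, e4, Ideal.comap_comap]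
  rfl


lemma comap_iInf' {R S : Type*} [Semiring R] [Semiring S] (f : R →+* S) {L : Type*}
    (T : L → Ideal S) : Ideal.comap f (⨅ l, T l) = ⨅ l, Ideal.comap f (T l) := by
  ext x
  simp only [Ideal.mem_comap, Submodule.mem_iInf]

/-- The Hadamard product of ideals distributes over (arbitrary) intersections. -/
theorem hadamardProduct_iInf [IsAlgClosed K] {N : ℕ} {L : Type*}
    (J : L → Ideal (MvPolynomial (Fin (N+1)) K)) (K' : Ideal (MvPolynomial (Fin (N+1)) K)) :
    hadamardProduct N (⨅ l, J l) K' = ⨅ l, hadamardProduct N (J l) K' := by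
  rw [hp_eq, map_iInf_eq J, comap_iInf']
  exact iInf_congr fun l => (hp_eq (J l) K').symm
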